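/- With ĝ_p and g̃⁺ = g⊗ℂ((t)) ⊕ ℂκ (bracket [a⊗f, b⊗g] = [a,b]⊗fg + ⟨a,b⟩ Res_t(f'g) κ), the linear map ρ₊ sending a(n) ↦ a⊗t^{2n}, a¹(n) ↦ 2∑_{i≥0} (λ_i/4^i) a⊗t^{2n+2i+1}, κ₊ ↦ 2κ, κ₋ ↦ 0 is a Lie algebra homomorphism ρ₊ : ĝ_p → g̃⁺. -/

import Mathlib

open scoped TensorProduct

noncomputable def lam (n : ℕ) : ℂ :=
  (∏ k ∈ Finset.range n, ((1 : ℂ) / 2 - k)) / n.factorial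

/-- Formal derivative d/dt on ℂ((t)). -/
noncomputable def lderiv (F : LaurentSeries ℂ) : LaurentSeries ℂ where
  coeff k := (k + 1 : ℤ) • F.coeff (k + 1)
  isPWO_support' := by
    have h : (Function.support fun k : ℤ => (k + 1 : ℤ) • F.coeff (k + 1)) ⊆
        (fun k : ℤ => k - 1) '' F.support := by
      intro k hk
      simp only [Function.mem_support] at hk
      refine ⟨k + 1, ?_, by ring⟩
      simp only [HahnSeries.mem_support]
      intro h0
      apply hk
      rw [h0, smul_zero]
    exact (F.isPWO_support.image_of_monotone (fun a b hab => by omega)).mono h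

/-- u = 2 ∑_{i≥0} (λ_i/4^i) t^{2i+1} ∈ ℂ((t)), so that
2 ∑_{i≥0} (λ_i/4^i) t^{2n+2i+1} = t^{2n} · u. -/
noncomputable def uPlus : LaurentSeries ℂ :=
  HahnSeries.ofPowerSeries ℤ ℂ
    (PowerSeries.mk fun k => if Odd k then 2 * lam (k / 2) / 4 ^ (k / 2) else 0)

/-- t^{2n} ∈ ℂ((t)). -/
noncomputable def t2 (n : ℤ) : LaurentSeries ℂ := HahnSeries.single (2 * n : ℤ) (1 : ℂ)

/-- The underlying space of g̃⁺ = g ⊗ ℂ((t)) ⊕ ℂκ. -/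
abbrev Gt (L : Type*) [LieRing L] [LieAlgebra ℂ L] : Type _ :=
  (TensorProduct ℂ L (LaurentSeries ℂ)) × ℂ

/-- The bracket of g̃⁺ on pure tensors:
[a⊗f, b⊗g] = [a,b]⊗fg + ⟨a,b⟩ Res_t(f'g) κ, where Res_t is the coefficient
of t⁻¹. -/
noncomputable def pbr {L : Type*} [LieRing L] [LieAlgebra ℂ L]
    (B : LinearMap.BilinForm ℂ L) (a : L) (f : LaurentSeries ℂ)
    (b : L) (g : LaurentSeries ℂ) : Gt L :=
  (⁅a, b⁆ ⊗ₜ[ℂ] (f * g), B a b * (lderiv f * g).coeff (-1))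

/-- ρ₊(a(n)) = a ⊗ t^{2n}. -/
noncomputable def rhoA {L : Type*} [LieRing L] [LieAlgebra ℂ L]
    (a : L) (n : ℤ) : Gt L := (a ⊗ₜ[ℂ] t2 n, 0)

/-- ρ₊(a¹(n)) = 2 ∑_{i≥0} (λ_i/4^i) a ⊗ t^{2n+2i+1} = a ⊗ (t^{2n} u). -/
noncomputable def rhoA1 {L : Type*} [LieRing L] [LieAlgebra ℂ L]
    (a : L) (n : ℤ) : Gt L := (a ⊗ₜ[ℂ] (t2 n * uPlus), 0)

/-- κ as an element of g̃⁺; ρ₊(κ₊) = 2κ, ρ₊(κ₋) = 0. -/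
noncomputable def kap (L : Type*) [LieRing L] [LieAlgebra ℂ L] : Gt L := (0, 1)


namespace RhoPlusAux
open Finset HahnSeries PowerSeries

lemma descPoch_smeval (r : ℂ) (n : ℕ) :
    (descPochhammer ℤ n).smeval r = ∏ k ∈ Finset.range n, (r - k) := by
  induction n with
  | zero => simp [descPochhammer_zero, Polynomial.smeval_one]
  | succ n ih =>
      rw [descPochhammer_succ_right, Polynomial.smeval_mul, ih, Finset.prod_range_succ,
        Polynomial.smeval_sub, Polynomial.smeval_X, Polynomial.smeval_natCast]
      simp

lemma lam_eq (n : ℕ) : lam n = Ring.choose ((1:ℂ)/2) n := by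
  have h := Ring.descPochhammer_eq_factorial_smul_choose (R := ℂ) ((1:ℂ)/2) n
  rw [descPoch_smeval] at h
  rw [lam, h, nsmul_eq_mul, mul_div_cancel_left₀]
  exact_mod_cast Nat.factorial_ne_zero n

lemma lam_conv (n : ℕ) :
    ∑ ij ∈ Finset.HasAntidiagonal.antidiagonal n, lam ij.1 * lam ij.2 = if n ≤ 1 then 1 else 0 := by
  have h := Ring.add_choose_eq (r := (1:ℂ)/2) (s := (1:ℂ)/2) n (Commute.all _ _)
  have h2 : (1:ℂ)/2 + 1/2 = ((1:ℕ):ℂ) := by norm_num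
  rw [h2, Ring.choose_natCast] at h
  simp only [← lam_eq] at h
  rw [← h]
  rcases n with _ | _ | n <;> simp [Nat.choose]

noncomputable def fc (k : ℕ) : ℂ := if Odd k then 2 * lam (k / 2) / 4 ^ (k / 2) else 0

lemma conv_eval (n : ℕ) :
    ∑ ij ∈ Finset.HasAntidiagonal.antidiagonal n, fc ij.1 * fc ij.2
      = if n = 2 then 4 else if n = 4 then 1 else 0 := by
  rcases Nat.even_or_odd n with he | ho
  · obtain ⟨s, rfl⟩ := he
    match s with
    | 0 => simp [fc]
    | (s+1) =>
      have hn : s + 1 + (s + 1) = 2*s + 2 := by ring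
      rw [hn]
      have key : ∑ ij ∈ Finset.HasAntidiagonal.antidiagonal (2*s+2), fc ij.1 * fc ij.2
          = ∑ ij ∈ Finset.HasAntidiagonal.antidiagonal s, fc (2*ij.1+1) * fc (2*ij.2+1) := by
        rw [← Finset.sum_filter_of_ne (p := fun ij => Odd ij.1 ∧ Odd ij.2)]
        · refine Finset.sum_nbij' (i := fun ij => ((ij.1-1)/2, (ij.2-1)/2))
            (j := fun ab => (2*ab.1+1, 2*ab.2+1)) ?_ ?_ ?_ ?_ ?_
          · rintro ⟨i, j⟩ hij
            simp only [mem_filter, Finset.HasAntidiagonal.mem_antidiagonal, Nat.odd_iff] at hij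
            simp only [Finset.HasAntidiagonal.mem_antidiagonal]
            omega
          · rintro ⟨x, y⟩ hxy
            simp only [Finset.HasAntidiagonal.mem_antidiagonal] at hxy
            simp only [mem_filter, Finset.HasAntidiagonal.mem_antidiagonal, Nat.odd_iff]
            omega
          · rintro ⟨i, j⟩ hij
            simp only [mem_filter, Finset.HasAntidiagonal.mem_antidiagonal, Nat.odd_iff] at hij
            simp only [Prod.mk.injEq]
            omega
          · rintro ⟨x, y⟩ hxy
            simp only [Finset.HasAntidiagonal.mem_antidiagonal] at hxy
            simp only [Prod.mk.injEq]
            omega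
          · rintro ⟨i, j⟩ hij
            simp only [mem_filter, Finset.HasAntidiagonal.mem_antidiagonal, Nat.odd_iff] at hij
            have h1 : 2*((i-1)/2)+1 = i := by omega
            have h2 : 2*((j-1)/2)+1 = j := by omega
            show fc i * fc j = fc (2*((i-1)/2)+1) * fc (2*((j-1)/2)+1)
            rw [h1, h2]
        · rintro ⟨i, j⟩ hij hne
          simp only [Finset.HasAntidiagonal.mem_antidiagonal] at hij
          by_contra hc
          apply hne
          rcases Nat.even_or_odd i with hi | hi
          · simp [fc, Nat.not_odd_iff_even.mpr hi]
          · rcases Nat.even_or_odd j with hj | hj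
            · simp [fc, Nat.not_odd_iff_even.mpr hj]
            · exact absurd ⟨hi, hj⟩ hc
      rw [key]
      have step : ∀ ij ∈ Finset.HasAntidiagonal.antidiagonal s,
          fc (2*ij.1+1) * fc (2*ij.2+1) = (4 / 4^s) * (lam ij.1 * lam ij.2) := by
        rintro ⟨x, y⟩ hxy
        simp only [Finset.HasAntidiagonal.mem_antidiagonal] at hxy
        have hx : (2*x+1)/2 = x := by omega
        have hy : (2*y+1)/2 = y := by omega
        simp only [fc, hx, hy, if_pos (by exact ⟨x, by ring⟩ : Odd (2*x+1)),
          if_pos (by exact ⟨y, by ring⟩ : Odd (2*y+1))]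
        rw [← hxy]
        field_simp
        ring
      rw [Finset.sum_congr rfl step, ← Finset.mul_sum, lam_conv]
      match s with
      | 0 => norm_num
      | 1 => norm_num
      | (s+2) =>
        rw [if_neg (by omega), if_neg (by omega), if_neg (by omega)]
        simp
  · rw [Finset.sum_eq_zero]
    · rcases ho with ⟨k, rfl⟩
      rw [if_neg (by omega), if_neg (by omega)]
    · rintro ⟨i, j⟩ hij
      simp only [Finset.HasAntidiagonal.mem_antidiagonal] at hij
      rcases Nat.even_or_odd i with hi | hi
      · simp [fc, Nat.not_odd_iff_even.mpr hi]
      · have hj : ¬ Odd j := by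
          rw [Nat.odd_iff] at hi ho ⊢; omega
        simp [fc, hj]

noncomputable def vP : PowerSeries ℂ := PowerSeries.mk fc

lemma uPlus_eq : uPlus = HahnSeries.ofPowerSeries ℤ ℂ vP := rfl

lemma vP_sq : vP * vP = PowerSeries.C (R := ℂ) 4 * PowerSeries.X^2 + PowerSeries.X^4 := by
  ext n
  rw [PowerSeries.coeff_mul]
  simp only [vP, PowerSeries.coeff_mk]
  rw [conv_eval]
  rw [map_add, PowerSeries.coeff_C_mul, PowerSeries.coeff_X_pow, PowerSeries.coeff_X_pow]
  rcases eq_or_ne n 2 with rfl | h2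
  · norm_num
  · rcases eq_or_ne n 4 with rfl | h4
    · norm_num
    · simp [h2, h4]

lemma vP_deriv_mul : vP.derivativeFun * vP
    = PowerSeries.C (R := ℂ) 4 * PowerSeries.X + PowerSeries.C (R := ℂ) 2 * PowerSeries.X^3 := by
  have h2 : (PowerSeries.C (R := ℂ) 2) ≠ 0 := by
    intro h
    have := congrArg (PowerSeries.coeff (R := ℂ) 0) h
    simp at this
  apply mul_left_cancel₀ h2
  have hd := PowerSeries.derivativeFun_mul vP vP
  rw [vP_sq] at hd
  have hd2 : PowerSeries.derivativeFun
      (PowerSeries.C (R := ℂ) 4 * PowerSeries.X^2 + PowerSeries.X^4 : PowerSeries ℂ)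
      = PowerSeries.C (R := ℂ) 2 * (PowerSeries.C (R := ℂ) 4 * PowerSeries.X + PowerSeries.C (R := ℂ) 2 * PowerSeries.X^3) := by
    show PowerSeries.derivative ℂ _ = _
    rw [map_add, Derivation.leibniz, Derivation.leibniz_pow, Derivation.leibniz_pow]
    simp only [PowerSeries.derivative_X, PowerSeries.derivative_C]
    have hc : (PowerSeries.C (R := ℂ)) 2 = (2 : PowerSeries ℂ) := by
      simp [map_ofNat]
    simp only [smul_eq_mul, nsmul_eq_mul, mul_zero, add_zero, mul_one, hc]
    push_cast
    ring
  rw [hd2] at hd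
  rw [hd]
  have hc : (PowerSeries.C (R := ℂ)) 2 = (2 : PowerSeries ℂ) := by simp [map_ofNat]
  simp only [smul_eq_mul, hc]
  ring

lemma lderiv_coeff (F : LaurentSeries ℂ) (k : ℤ) :
    (lderiv F).coeff k = (k + 1 : ℤ) • F.coeff (k + 1) := rfl

lemma coeff_single_mul (a k : ℤ) (r : ℂ) (F : LaurentSeries ℂ) :
    (HahnSeries.single a r * F).coeff k = r * F.coeff (k - a) := by
  have := HahnSeries.coeff_single_mul_add (r := r) (x := F) (a := k - a) (b := a)
  rwa [sub_add_cancel] at this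

lemma ofPS_coeff_neg (f : PowerSeries ℂ) (k : ℤ) (hk : k < 0) :
    (HahnSeries.ofPowerSeries ℤ ℂ f).coeff k = 0 := by
  rw [HahnSeries.ofPowerSeries_apply]
  apply HahnSeries.embDomain_notin_range
  rintro ⟨n, hn⟩
  have h2 : ((n : ℤ)) = k := hn
  omega

lemma lderiv_ofPS (f : PowerSeries ℂ) :
    lderiv (HahnSeries.ofPowerSeries ℤ ℂ f)
      = HahnSeries.ofPowerSeries ℤ ℂ f.derivativeFun := by
  ext k
  rw [lderiv_coeff]
  rcases lt_trichotomy k (-1) with h | rfl | h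
  · rw [ofPS_coeff_neg _ _ (by omega), ofPS_coeff_neg _ _ (by omega), smul_zero]
  · norm_num
    exact (ofPS_coeff_neg _ _ (by omega)).symm
  · obtain ⟨n, rfl⟩ : ∃ n : ℕ, ((n : ℤ)) = k := ⟨k.toNat, by omega⟩
    have h1 : (n : ℤ) + 1 = ((n + 1 : ℕ) : ℤ) := by push_cast; ring
    rw [h1, HahnSeries.ofPowerSeries_apply_coeff, HahnSeries.ofPowerSeries_apply_coeff,
      show f.derivativeFun = PowerSeries.derivative ℂ f from rfl, PowerSeries.coeff_derivative,
      zsmul_eq_mul]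
    push_cast
    ring

lemma uPlus_coeff_even (k : ℤ) (hk : Even k) : uPlus.coeff k = 0 := by
  rcases lt_or_ge k 0 with h | h
  · exact ofPS_coeff_neg _ _ h
  · obtain ⟨n, rfl⟩ : ∃ n : ℕ, ((n : ℤ)) = k := ⟨k.toNat, by omega⟩
    rw [uPlus, HahnSeries.ofPowerSeries_apply_coeff, PowerSeries.coeff_mk]
    have hne : ¬ Odd n := by
      rw [Nat.odd_iff]
      rw [Int.even_iff] at hk
      omega
    simp [hne]

lemma lderiv_single (a : ℤ) (r : ℂ) :
    lderiv (HahnSeries.single a r) = HahnSeries.single (a - 1) ((a : ℂ) * r) := by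
  ext k
  rw [lderiv_coeff]
  by_cases h : k = a - 1
  · subst h
    rw [HahnSeries.coeff_single_same]
    have : a - 1 + 1 = a := by ring
    rw [this, HahnSeries.coeff_single_same, zsmul_eq_mul]
  · have h2 : k + 1 ≠ a := by omega
    rw [HahnSeries.coeff_single, HahnSeries.coeff_single, if_neg h2, if_neg h, smul_zero]

lemma leibniz_single (a : ℤ) (F : LaurentSeries ℂ) :
    lderiv (HahnSeries.single a (1 : ℂ) * F)
      = (a : ℂ) • (HahnSeries.single (a - 1) (1 : ℂ) * F)
        + HahnSeries.single a (1 : ℂ) * lderiv F := by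
  ext k
  rw [lderiv_coeff, HahnSeries.coeff_add, HahnSeries.coeff_smul,
    coeff_single_mul, coeff_single_mul, coeff_single_mul, lderiv_coeff]
  have h1 : k - (a - 1) = k - a + 1 := by ring
  have h2 : k + 1 - a = k - a + 1 := by ring
  rw [h1, h2, zsmul_eq_mul, zsmul_eq_mul, smul_eq_mul]
  push_cast
  ring

lemma smul_single' (a : ℤ) (c : ℂ) :
    c • HahnSeries.single a (1 : ℂ) = HahnSeries.single a c := by
  ext k
  rw [HahnSeries.coeff_smul, HahnSeries.coeff_single, HahnSeries.coeff_single]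
  split_ifs <;> simp

lemma uPlus_sq : uPlus * uPlus
    = HahnSeries.single (2 : ℤ) (4 : ℂ) + HahnSeries.single (4 : ℤ) (1 : ℂ) := by
  rw [uPlus_eq, ← map_mul, vP_sq, map_add, map_mul, map_pow, map_pow,
    HahnSeries.ofPowerSeries_C, HahnSeries.ofPowerSeries_X]
  rw [pow_two, HahnSeries.single_mul_single]
  rw [show (4 : ℕ) = 2 + 2 by rfl, _root_.pow_add, pow_two, HahnSeries.single_mul_single,
    HahnSeries.single_mul_single]
  rw [HahnSeries.C_mul_eq_smul]
  simp only [mul_one, one_mul]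
  rw [smul_single']
  norm_num

lemma du_mul_u : lderiv uPlus * uPlus
    = HahnSeries.single (1 : ℤ) (4 : ℂ) + HahnSeries.single (3 : ℤ) (2 : ℂ) := by
  rw [uPlus_eq, lderiv_ofPS, ← map_mul, vP_deriv_mul, map_add, map_mul, map_mul, map_pow,
    HahnSeries.ofPowerSeries_C, HahnSeries.ofPowerSeries_C, HahnSeries.ofPowerSeries_X]
  rw [_root_.pow_succ, _root_.pow_succ, pow_one,
    HahnSeries.single_mul_single, HahnSeries.single_mul_single]
  rw [HahnSeries.C_mul_eq_smul, HahnSeries.C_mul_eq_smul]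
  simp only [mul_one, one_mul]
  rw [smul_single', smul_single']
  norm_num

lemma smul_mul' (c : ℂ) (X Y : LaurentSeries ℂ) : (c • X) * Y = c • (X * Y) := by
  rw [← HahnSeries.C_mul_eq_smul, ← HahnSeries.C_mul_eq_smul, mul_assoc]

lemma t2_mul_t2 (m n : ℤ) : t2 m * t2 n = t2 (m + n) := by
  rw [t2, t2, t2, HahnSeries.single_mul_single, mul_one]
  congr 1
  ring

end RhoPlusAux

/-- ρ₊ : ĝ_p → g̃⁺ is a Lie algebra homomorphism: it preserves the defining
brackets of the three-point affine Lie algebra ĝ_p on generators (the central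
elements κ₊ ↦ 2κ, κ₋ ↦ 0 go to central elements, so this determines a
homomorphism by bilinearity). -/
theorem rho_plus_lieHom {L : Type*} [LieRing L] [LieAlgebra ℂ L]
    (B : LinearMap.BilinForm ℂ L)
    (hsym : ∀ x y : L, B x y = B y x)
    (hinv : ∀ x y z : L, B ⁅x, y⁆ z = B x ⁅y, z⁆)
    (hnd : B.Nondegenerate) :
    ∀ (a b : L) (m n : ℤ),
      -- [a(m), b(n)] = [a,b](m+n) + m⟨a,b⟩δ_{m+n,0}(κ₊+κ₋); κ₊+κ₋ ↦ 2κ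
      pbr B a (t2 m) b (t2 n) =
        rhoA ⁅a, b⁆ (m + n) +
          ((m : ℂ) * B a b * (if m + n = 0 then 1 else 0)) • ((2 : ℂ) • kap L) ∧
      -- [a(m), b¹(n)] = [a,b]¹(m+n) + m⟨a,b⟩ λ_{m+n+1} 4^{m+n+1} κ₋; κ₋ ↦ 0
      pbr B a (t2 m) b (t2 n * uPlus) = rhoA1 ⁅a, b⁆ (m + n) ∧
      -- [a¹(m), b¹(n)] = 4[a,b](m+n+1) + [a,b](m+n+2)
      --   + ((4m+2)δ_{m+n+1,0} + (m+1)δ_{m+n+2,0})⟨a,b⟩(κ₊+κ₋)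
      pbr B a (t2 m * uPlus) b (t2 n * uPlus) =
        (4 : ℂ) • rhoA ⁅a, b⁆ (m + n + 1) + rhoA ⁅a, b⁆ (m + n + 2) +
          (((4 * (m : ℂ) + 2) * (if m + n + 1 = 0 then 1 else 0) +
            ((m : ℂ) + 1) * (if m + n + 2 = 0 then 1 else 0)) * B a b) •
              ((2 : ℂ) • kap L) := by
  intro a b m n
  open RhoPlusAux in
  refine ⟨?_, ?_, ?_⟩
  · rw [pbr, rhoA, kap]
    rw [Prod.smul_mk, Prod.smul_mk, Prod.mk_add_mk, Prod.mk.injEq]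
    constructor
    · rw [t2_mul_t2]
      simp
    · rw [t2, t2, lderiv_single, mul_one, HahnSeries.single_mul_single,
        HahnSeries.coeff_single]
      simp only [smul_eq_mul, smul_zero, add_zero, zero_add, mul_one]
      split_ifs with h1 h2 h2
      · push_cast; ring
      · exfalso; omega
      · exfalso; omega
      · simp
  · rw [pbr, rhoA1, Prod.mk.injEq]
    constructor
    · rw [← mul_assoc, t2_mul_t2]
    · rw [t2, lderiv_single, mul_one]
      rw [coeff_single_mul]
      rw [show t2 n * uPlus = HahnSeries.single (2*n) 1 * uPlus from rfl]
      rw [coeff_single_mul, one_mul]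
      rw [uPlus_coeff_even _ ⟨-m - n, by ring⟩]
      simp
  · rw [pbr, rhoA, rhoA, kap]
    rw [Prod.smul_mk, Prod.smul_mk, Prod.smul_mk, Prod.mk_add_mk, Prod.mk_add_mk,
      Prod.mk.injEq]
    constructor
    · have hu2 : t2 m * uPlus * (t2 n * uPlus) = (4:ℂ) • t2 (m+n+1) + t2 (m+n+2) := by
        have h1 : t2 m * uPlus * (t2 n * uPlus) = (t2 m * t2 n) * (uPlus * uPlus) := by
          ring
        rw [h1, t2_mul_t2, uPlus_sq, mul_add]
        rw [show t2 (m+n) = HahnSeries.single (2*(m+n)) (1:ℂ) from rfl,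
          HahnSeries.single_mul_single, HahnSeries.single_mul_single,
          show t2 (m+n+1) = HahnSeries.single (2*(m+n+1)) (1:ℂ) from rfl,
          show t2 (m+n+2) = HahnSeries.single (2*(m+n+2)) (1:ℂ) from rfl,
          smul_single']
        rw [show (2*(m+n) + 2 : ℤ) = 2*(m+n+1) by ring,
          show (2*(m+n) + 4 : ℤ) = 2*(m+n+2) by ring]
        norm_num
      rw [hu2, TensorProduct.tmul_add, TensorProduct.tmul_smul]
      simp
    · have hres : (lderiv (t2 m * uPlus) * (t2 n * uPlus)).coeff (-1)
          = (8*(m:ℂ)+4) * (if m+n+1 = 0 then 1 else 0)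
            + (2*(m:ℂ)+2) * (if m+n+2 = 0 then 1 else 0) := by
        rw [show t2 m = HahnSeries.single (2*m) (1:ℂ) from rfl, leibniz_single,
          add_mul, RhoPlusAux.smul_mul', HahnSeries.coeff_add, HahnSeries.coeff_smul]
        have hA : HahnSeries.single (2*m-1) (1:ℂ) * uPlus * (t2 n * uPlus)
            = HahnSeries.single (2*m-1) 1 * (HahnSeries.single (2*n) 1 * (uPlus * uPlus)) := by
          rw [show t2 n = HahnSeries.single (2*n) (1:ℂ) from rfl]
          ring
        have hB : HahnSeries.single (2*m) (1:ℂ) * lderiv uPlus * (t2 n * uPlus)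
            = HahnSeries.single (2*m) 1 * (HahnSeries.single (2*n) 1 * (lderiv uPlus * uPlus)) := by
          rw [show t2 n = HahnSeries.single (2*n) (1:ℂ) from rfl]
          ring
        rw [hA, hB, coeff_single_mul, coeff_single_mul, coeff_single_mul, coeff_single_mul,
          uPlus_sq, du_mul_u, HahnSeries.coeff_add, HahnSeries.coeff_add,
          HahnSeries.coeff_single, HahnSeries.coeff_single, HahnSeries.coeff_single,
          HahnSeries.coeff_single, smul_eq_mul]
        split_ifs <;> first
          | (exfalso; omega)
          | (push_cast; ring)
      rw [hres]
      simp only [smul_eq_mul, smul_zero, add_zero, zero_add, mul_one]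
      ring
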